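/- For every real q with 0 < q < 1 and every nonzero complex number z, the Ramanujan function satisfies |A_q(z)| ≤ (|z|/√q)^{1/2} · exp(−(log|z|)²/(4 log q)) / (q;q)_∞. (Note log q < 0, so the exponential factor is a Gaussian in log|z|.) -/

import Mathlib

/-- The finite q-Pochhammer symbol `(a;q)_n = ∏_{j=0}^{n-1} (1 - a q^j)` in `ℂ`,
with real base `q`. -/
noncomputable def qPochC (q : ℝ) (a : ℂ) (n : ℕ) : ℂ :=
  ∏ j ∈ Finset.range n, (1 - a * (q : ℂ) ^ j)

/-- The infinite q-Pochhammer symbol `(a;q)_∞ = ∏_{j=0}^{∞} (1 - a q^j)` in `ℝ`. -/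
noncomputable def qPochInfR (q a : ℝ) : ℝ :=
  ∏' j : ℕ, (1 - a * q ^ j)

/-- The Ramanujan function (q-Airy function)
`A_q(z) = Σ_{k=0}^∞ q^{k²} (−z)^k / (q;q)_k`. -/
noncomputable def ramanujanAq (q : ℝ) (z : ℂ) : ℂ :=
  ∑' k : ℕ, (q : ℂ) ^ (k ^ 2) * (-z) ^ k / qPochC q q k

/-- For `0 < q < 1` and every nonzero complex `z`,
`|A_q(z)| ≤ (|z|/√q)^{1/2} · exp(−(log|z|)²/(4 log q)) / (q;q)_∞`. -/
theorem abs_ramanujanAq_le_gaussian (q : ℝ) (hq0 : 0 < q) (hq1 : q < 1) (z : ℂ) (hz : z ≠ 0) :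
    ‖ramanujanAq q z‖ ≤
      (‖z‖ / Real.sqrt q) ^ ((1 : ℝ) / 2) *
        Real.exp (-(Real.log ‖z‖) ^ 2 / (4 * Real.log q)) / qPochInfR q q := by
  set r : ℝ := ‖z‖ with hr_def
  have hr : 0 < r := norm_pos_iff.mpr hz
  set t : ℝ := Real.log q with ht_def
  set s : ℝ := Real.log r with hs_def
  have ht : t < 0 := Real.log_neg hq0 hq1
  have ht0 : t ≠ 0 := ht.ne
  set f : ℕ → ℝ := fun j => 1 - q * q ^ j with hf_def
  have hq_pow_lt : ∀ j : ℕ, q * q ^ j < 1 := by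
    intro j
    calc q * q ^ j ≤ q * 1 := by
          have : q ^ j ≤ 1 := pow_le_one₀ hq0.le hq1.le
          nlinarith
      _ < 1 := by linarith
  have hq_pow_pos : ∀ j : ℕ, 0 < q * q ^ j := fun j => mul_pos hq0 (pow_pos hq0 j)
  have hfpos : ∀ j, 0 < f j := fun j => by have := hq_pow_lt j; simp [hf_def]; linarith
  have hfle : ∀ j, f j ≤ 1 := fun j => by have := hq_pow_pos j; simp [hf_def]; linarith
  set P : ℕ → ℝ := fun n => ∏ j ∈ Finset.range n, f j with hP_def
  have hPpos : ∀ n, 0 < P n := fun n => Finset.prod_pos (fun j _ => hfpos j)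
  -- qPochC is the cast of P
  have hPoch : ∀ k, qPochC q q k = ((P k : ℝ) : ℂ) := by
    intro k
    simp only [qPochC, hP_def, hf_def, Complex.ofReal_prod]
    refine Finset.prod_congr rfl fun j _ => by push_cast; ring
  -- summability of logs
  have hfge : ∀ j, 1 - q ≤ f j := by
    intro j
    have : q * q ^ j ≤ q := by
      have : q ^ j ≤ 1 := pow_le_one₀ hq0.le hq1.le
      nlinarith
    simp [hf_def]; linarith
  have hlog_sum : Summable fun j => Real.log (f j) := by
    rw [← summable_neg_iff]
    apply Summable.of_nonneg_of_le
      (fun j => by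
        have := Real.log_nonpos (hfpos j).le (hfle j); linarith)
      (fun j => ?_) ((summable_geometric_of_lt_one hq0.le hq1).mul_left (q / (1 - q)))
    have h1 : -Real.log (f j) = Real.log (f j)⁻¹ := (Real.log_inv _).symm
    rw [h1]
    have h2 : Real.log (f j)⁻¹ ≤ (f j)⁻¹ - 1 :=
      Real.log_le_sub_one_of_pos (inv_pos.2 (hfpos j))
    have h3 : (f j)⁻¹ - 1 = (q * q ^ j) / f j := by
      rw [inv_eq_one_div, div_sub_one (hfpos j).ne']
      congr 1
      simp [hf_def]
    have h4 : (q * q ^ j) / f j ≤ (q * q ^ j) / (1 - q) := by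
      apply div_le_div_of_nonneg_left (hq_pow_pos j).le (by linarith [hfge j] : (0:ℝ) < 1 - q) (hfge j)
    calc Real.log (f j)⁻¹ ≤ (q * q ^ j) / f j := by rw [← h3]; exact h2
      _ ≤ (q * q ^ j) / (1 - q) := h4
      _ = q / (1 - q) * q ^ j := by ring
  set S : ℝ := ∑' j, Real.log (f j) with hS_def
  have hProd : HasProd f (Real.exp S) := by
    have h := hlog_sum.hasSum.rexp
    have : (Real.exp ∘ fun j => Real.log (f j)) = f := by
      funext j; simp [Real.exp_log (hfpos j)]
    rwa [this] at h
  have hQinf : qPochInfR q q = Real.exp S := by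
    rw [qPochInfR]; exact hProd.tprod_eq
  have hEpos : 0 < Real.exp S := Real.exp_pos S
  have hE_le : ∀ n, Real.exp S ≤ P n := by
    intro n
    have h1 : S ≤ ∑ j ∈ Finset.range n, Real.log (f j) := by
      have := Summable.sum_le_tsum (Finset.range n)
        (fun j _ => by have := Real.log_nonpos (hfpos j).le (hfle j); linarith)
        hlog_sum.neg
      have h2 : ∑ j ∈ Finset.range n, -Real.log (f j) ≤ ∑' j, -Real.log (f j) := this
      rw [tsum_neg] at h2
      have h3 : -S ≥ ∑ j ∈ Finset.range n, -Real.log (f j) := by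
        simpa using h2
      simp only [Finset.sum_neg_distrib] at h3
      linarith
    calc Real.exp S ≤ Real.exp (∑ j ∈ Finset.range n, Real.log (f j)) := Real.exp_le_exp.2 h1
      _ = P n := by
        rw [Real.exp_sum]
        exact Finset.prod_congr rfl fun j _ => Real.exp_log (hfpos j)
  -- Euler finite identity
  have hEuler : ∀ n, ∑ k ∈ Finset.range (n + 1), q ^ k / P k = 1 / P n := by
    intro n
    induction n with
    | zero => simp [hP_def]
    | succ n ih =>
      rw [Finset.sum_range_succ, ih]
      have hPn := hPpos n
      have hPn1 := hPpos (n + 1)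
      have hstep : P (n + 1) = P n * f n := Finset.prod_range_succ f n
      have hfn := hfpos n
      rw [hstep]
      field_simp
      rw [hf_def]
      ring_nf
  set u : ℕ → ℝ := fun k => q ^ k / P k with hu_def
  have hu0 : ∀ k, 0 ≤ u k := fun k => div_nonneg (pow_nonneg hq0.le k) (hPpos k).le
  have husum_le : ∀ n, ∑ k ∈ Finset.range n, u k ≤ 1 / Real.exp S := by
    intro n
    match n with
    | 0 => simp; positivity
    | Nat.succ m =>
      rw [hEuler m]
      exact one_div_le_one_div_of_le hEpos (hE_le m)
  have hu_summable : Summable u := summable_of_sum_range_le hu0 husum_le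
  have hu_tsum : ∑' k, u k ≤ 1 / Real.exp S := Real.tsum_le_of_sum_range_le hu0 husum_le
  set C : ℝ := Real.exp (s / 2 - t / 4 - s ^ 2 / (4 * t)) with hC_def
  have hCpos : 0 < C := Real.exp_pos _
  -- key pointwise bound
  have hkey : ∀ k : ℕ, q ^ (k ^ 2) * r ^ k ≤ C * q ^ k := by
    intro k
    have hqe : ∀ n : ℕ, q ^ n = Real.exp (n * t) := by
      intro n; rw [Real.exp_nat_mul, Real.exp_log hq0]
    have hre : r ^ k = Real.exp (k * s) := by
      rw [Real.exp_nat_mul, Real.exp_log hr]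
    rw [hqe (k ^ 2), hqe k, hre, ← Real.exp_add, ← Real.exp_add, Real.exp_le_exp]
    have hexp : (s / 2 - t / 4 - s ^ 2 / (4 * t) + k * t) - ((k : ℝ) ^ 2 * t + k * s)
        = (2 * t * k + s - t) ^ 2 / (-(4 * t)) := by
      field_simp [ht0]
      ring
    have hnn : 0 ≤ (2 * t * k + s - t) ^ 2 / (-(4 * t)) :=
      div_nonneg (sq_nonneg _) (by linarith)
    push_cast
    push_cast at hexp
    linarith [hexp, hnn]
  -- abs of terms
  have habs : ∀ k : ℕ, ‖(q : ℂ) ^ (k ^ 2) * (-z) ^ k / qPochC q q k‖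
      = q ^ (k ^ 2) * r ^ k / P k := by
    intro k
    rw [hPoch, norm_div, norm_mul, norm_pow, norm_pow, norm_neg, Complex.norm_real,
      Complex.norm_real, Real.norm_of_nonneg hq0.le, Real.norm_of_nonneg (hPpos k).le]
  have hterm_le : ∀ k : ℕ, ‖(q : ℂ) ^ (k ^ 2) * (-z) ^ k / qPochC q q k‖
      ≤ C * u k := by
    intro k
    rw [habs k, hu_def]
    have h1 : C * (q ^ k / P k) = C * q ^ k / P k := (mul_div_assoc _ _ _).symm
    rw [h1]
    exact div_le_div_of_nonneg_right (hkey k) (hPpos k).le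
  have hCu_summable : Summable fun k => C * u k := hu_summable.mul_left C
  have hterm_le' : ∀ k : ℕ, ‖(q : ℂ) ^ (k ^ 2) * (-z) ^ k / qPochC q q k‖ ≤ C * u k := by
    intro k
    exact hterm_le k
  have hnorm_summable : Summable fun k : ℕ =>
      ‖(q : ℂ) ^ (k ^ 2) * (-z) ^ k / qPochC q q k‖ :=
    Summable.of_nonneg_of_le (fun k => norm_nonneg _) hterm_le' hCu_summable
  have hmain : ‖ramanujanAq q z‖ ≤ C * (1 / Real.exp S) := by
    calc ‖ramanujanAq q z‖
        = ‖∑' k : ℕ, (q : ℂ) ^ (k ^ 2) * (-z) ^ k / qPochC q q k‖ := by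
          rw [ramanujanAq]
      _ ≤ ∑' k : ℕ, ‖(q : ℂ) ^ (k ^ 2) * (-z) ^ k / qPochC q q k‖ :=
          norm_tsum_le_tsum_norm hnorm_summable
      _ ≤ ∑' k, C * u k := Summable.tsum_le_tsum hterm_le' hnorm_summable hCu_summable
      _ = C * ∑' k, u k := tsum_mul_left
      _ ≤ C * (1 / Real.exp S) := mul_le_mul_of_nonneg_left hu_tsum hCpos.le
  -- identify the RHS
  have hrhs : (r / Real.sqrt q) ^ ((1 : ℝ) / 2) * Real.exp (-s ^ 2 / (4 * t)) / qPochInfR q q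
      = C * (1 / Real.exp S) := by
    have hsq : 0 < r / Real.sqrt q := div_pos hr (Real.sqrt_pos.2 hq0)
    have h1 : (r / Real.sqrt q) ^ ((1 : ℝ) / 2) = Real.exp (s / 2 - t / 4) := by
      rw [Real.rpow_def_of_pos hsq, Real.log_div hr.ne' (Real.sqrt_pos.2 hq0).ne',
        Real.log_sqrt hq0.le]
      congr 1; ring
    rw [h1, hQinf, ← Real.exp_add, hC_def]
    rw [div_eq_mul_inv, mul_one_div]
    congr 2
    ring
  rw [hrhs]
  exact hmain
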